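/- Let d, r', r'' be positive integers with r' ≥ 1, k ∈ ℤ_{++}^{r'} and l ∈ ℤ_{++}^{r''} (with conventions k_{r'+1} := 0, l_{r''+1} := 0). Then the following identity of rational functions of λ holds (equivalently, the polynomial identity obtained by cross-multiplying denominators): [∏_{a=1}^{r'+r''}(λ − d(a−1)/2)_{k_{r'}}] · C₀^d(λ, (k₁,…,k_{r'}), l) = C₀^d(λ + k_{r'}, (k₁−k_{r'}, …, k_{r'−1}−k_{r'}), l) · ∏_{j=1}^{r''}(λ + l_j − d(r'+j−1)/2)_{k_{r'}}, where on the right-hand side C₀^d is formed for the (r'−1)-tuple (k₁−k_{r'},…,k_{r'−1}−k_{r'}) ∈ ℤ_{++}^{r'−1} together with l. -/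

import Mathlib

open Polynomial Finset

/-- `(p)_m := ∏_{t=0}^{m−1}(p + t)` for a polynomial `p ∈ ℂ[X]`. -/
noncomputable def pochOf (p : Polynomial ℂ) (m : ℕ) : Polynomial ℂ :=
  ∏ t ∈ Finset.range m, (p + (t : Polynomial ℂ))

lemma pochOf_zero (p : Polynomial ℂ) : pochOf p 0 = 1 := by simp [pochOf]

lemma pochOf_add (p : Polynomial ℂ) (m n : ℕ) :
    pochOf p (m + n) = pochOf p m * pochOf (p + Polynomial.C (m : ℂ)) n := by
  unfold pochOf
  rw [Finset.prod_range_add]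
  congr 1
  refine Finset.prod_congr rfl fun t _ => ?_
  rw [Polynomial.C_eq_natCast]
  push_cast
  ring

lemma prod_Icc_one (n : ℕ) (f : ℕ → Polynomial ℂ) :
    ∏ i ∈ Finset.Icc 1 n, f i = ∏ t ∈ Finset.range n, f (1 + t) := by
  rw [← Finset.Ico_add_one_right_eq_Icc, Finset.prod_Ico_eq_prod_range]
  simp

lemma poch_sub_congr (a b : ℂ) (m : ℕ) (h : a = b) :
    pochOf (Polynomial.X - Polynomial.C a) m = pochOf (Polynomial.X - Polynomial.C b) m := by
  rw [h]

lemma pochOf_split (ν : ℂ) (m n e : ℕ) (h : n ≤ m) :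
    pochOf (Polynomial.X - Polynomial.C ν) (m + e) =
      pochOf (Polynomial.X - Polynomial.C ν) n *
        pochOf (Polynomial.X + Polynomial.C ((n : ℂ) - ν)) (m - n + e) := by
  have h1 : Polynomial.X + Polynomial.C ((n : ℂ) - ν)
      = (Polynomial.X - Polynomial.C ν) + Polynomial.C (n : ℂ) := by
    rw [map_sub]; ring
  rw [h1, ← pochOf_add]
  congr 1
  omega

lemma pochOf_swap (ν : ℂ) (m n : ℕ) :
    pochOf (Polynomial.X - Polynomial.C ν) m *
      pochOf (Polynomial.X + Polynomial.C ((m : ℂ) - ν)) n =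
    pochOf (Polynomial.X + Polynomial.C ((n : ℂ) - ν)) m *
      pochOf (Polynomial.X - Polynomial.C ν) n := by
  have h1 : Polynomial.X + Polynomial.C ((m : ℂ) - ν)
      = (Polynomial.X - Polynomial.C ν) + Polynomial.C (m : ℂ) := by rw [map_sub]; ring
  have h2 : Polynomial.X + Polynomial.C ((n : ℂ) - ν)
      = (Polynomial.X - Polynomial.C ν) + Polynomial.C (n : ℂ) := by rw [map_sub]; ring
  rw [h1, h2, ← pochOf_add, mul_comm, ← pochOf_add, add_comm]

lemma assemble (I K F B' G D E J : Polynomial ℂ) (h : K * G = E * J) :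
    (I * K) * (F * (B' * G)) * D = B' * E * (I * F * (D * J)) := by
  linear_combination (I * F * B' * D) * h

/-- The inductive step (from `r'` to `r'−1`) of Theorem 5.1:
`[∏_{a=1}^{r'+r''}(λ−d(a−1)/2)_{k_{r'}}]·C₀^d(λ,k,l)
  = C₀^d(λ+k_{r'},(k₁−k_{r'},…,k_{r'−1}−k_{r'}),l)·∏_{j=1}^{r''}(λ+l_j−d(r'+j−1)/2)_{k_{r'}}`,
stated as the polynomial identity obtained by cross-multiplying denominators. -/
theorem nonsimple_const_recursion (d r' r'' : ℕ) (hd : 0 < d) (hr' : 1 ≤ r')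
    (hr'' : 0 < r'') (k l : ℕ → ℕ)
    (hk : ∀ i j, 1 ≤ i → i ≤ j → j ≤ r' → k j ≤ k i) (hk0 : k (r' + 1) = 0)
    (hl : ∀ i j, 1 ≤ i → i ≤ j → j ≤ r'' → l j ≤ l i) (hl0 : l (r'' + 1) = 0) :
    (∏ a ∈ Finset.Icc 1 (r' + r''),
        pochOf (Polynomial.X - Polynomial.C ((d : ℂ) * ((a : ℂ) - 1) / 2)) (k r')) *
      (∏ i ∈ Finset.Icc 1 r', ∏ j ∈ Finset.Icc 1 r'',
        pochOf (Polynomial.X -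
          Polynomial.C ((d : ℂ) * ((i : ℂ) + (j : ℂ) - 1) / 2)) (k i + l j)) *
      (∏ i ∈ Finset.Icc 1 r', ∏ j ∈ Finset.Icc 1 (r'' + 1),
        pochOf (Polynomial.X +
          Polynomial.C ((k r' : ℂ) - (d : ℂ) * ((i : ℂ) + (j : ℂ) - 2) / 2))
          (k i - k r' + l j)) =
    (∏ i ∈ Finset.Icc 1 (r' - 1), ∏ j ∈ Finset.Icc 1 r'',
        pochOf (Polynomial.X +
          Polynomial.C ((k r' : ℂ) - (d : ℂ) * ((i : ℂ) + (j : ℂ) - 1) / 2))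
          (k i - k r' + l j)) *
      (∏ j ∈ Finset.Icc 1 r'',
        pochOf (Polynomial.X +
          Polynomial.C ((l j : ℂ) - (d : ℂ) * ((r' : ℂ) + (j : ℂ) - 1) / 2)) (k r')) *
      (∏ i ∈ Finset.Icc 1 (r' + 1), ∏ j ∈ Finset.Icc 1 (r'' + 1),
        pochOf (Polynomial.X -
          Polynomial.C ((d : ℂ) * ((i : ℂ) + (j : ℂ) - 2) / 2)) (k i + l j)) := by
  obtain ⟨s, rfl⟩ : ∃ s, r' = s + 1 := ⟨r' - 1, by omega⟩
  simp only [Nat.add_sub_cancel]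
  have hkc : ∀ i ∈ Finset.Icc 1 (s + 1), k (s + 1) ≤ k i := fun i hi =>
    hk i (s + 1) (Finset.mem_Icc.mp hi).1 (Finset.mem_Icc.mp hi).2 le_rfl
  -- notation-level products
  have hA : (∏ a ∈ Finset.Icc 1 (s + 1 + r''),
        pochOf (Polynomial.X - Polynomial.C ((d : ℂ) * ((a : ℂ) - 1) / 2)) (k (s + 1))) =
      (∏ i ∈ Finset.Icc 1 (s + 1),
        pochOf (Polynomial.X - Polynomial.C ((d : ℂ) * ((i : ℂ) - 1) / 2)) (k (s + 1))) *
      (∏ j ∈ Finset.Icc 1 r'',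
        pochOf (Polynomial.X -
          Polynomial.C ((d : ℂ) * (((s + 1 : ℕ) : ℂ) + (j : ℂ) - 1) / 2)) (k (s + 1))) := by
    rw [prod_Icc_one, Finset.prod_range_add]
    congr 1
    · rw [prod_Icc_one]
    · rw [prod_Icc_one]
      exact Finset.prod_congr rfl fun t _ => poch_sub_congr _ _ _ (by push_cast; ring)
  have hB : (∏ i ∈ Finset.Icc 1 (s + 1), ∏ j ∈ Finset.Icc 1 r'',
        pochOf (Polynomial.X -
          Polynomial.C ((d : ℂ) * ((i : ℂ) + (j : ℂ) - 1) / 2)) (k i + l j)) =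
      (∏ i ∈ Finset.Icc 1 (s + 1), ∏ j ∈ Finset.Icc 1 r'',
        pochOf (Polynomial.X -
          Polynomial.C ((d : ℂ) * ((i : ℂ) + (j : ℂ) - 1) / 2)) (k (s + 1))) *
      ((∏ i ∈ Finset.Icc 1 s, ∏ j ∈ Finset.Icc 1 r'',
        pochOf (Polynomial.X +
          Polynomial.C ((k (s + 1) : ℂ) - (d : ℂ) * ((i : ℂ) + (j : ℂ) - 1) / 2))
          (k i - k (s + 1) + l j)) *
      (∏ j ∈ Finset.Icc 1 r'',
        pochOf (Polynomial.X +
          Polynomial.C ((k (s + 1) : ℂ) -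
            (d : ℂ) * (((s + 1 : ℕ) : ℂ) + (j : ℂ) - 1) / 2)) (l j))) := by
    have step1 : (∏ i ∈ Finset.Icc 1 (s + 1), ∏ j ∈ Finset.Icc 1 r'',
        pochOf (Polynomial.X -
          Polynomial.C ((d : ℂ) * ((i : ℂ) + (j : ℂ) - 1) / 2)) (k i + l j)) =
        ∏ i ∈ Finset.Icc 1 (s + 1), ∏ j ∈ Finset.Icc 1 r'',
          (pochOf (Polynomial.X -
            Polynomial.C ((d : ℂ) * ((i : ℂ) + (j : ℂ) - 1) / 2)) (k (s + 1)) *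
           pochOf (Polynomial.X +
            Polynomial.C ((k (s + 1) : ℂ) - (d : ℂ) * ((i : ℂ) + (j : ℂ) - 1) / 2))
            (k i - k (s + 1) + l j)) :=
      Finset.prod_congr rfl fun i hi => Finset.prod_congr rfl fun j _ =>
        pochOf_split _ (k i) (k (s + 1)) (l j) (hkc i hi)
    rw [step1]
    simp only [Finset.prod_mul_distrib]
    refine congrArg₂ (· * ·) rfl ?_
    rw [Finset.prod_Icc_succ_top (by omega : 1 ≤ s + 1)]
    congr 1
    refine Finset.prod_congr rfl fun j _ => ?_
    rw [Nat.sub_self, zero_add]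
  have hH : (∏ i ∈ Finset.Icc 1 (s + 1), ∏ j ∈ Finset.Icc 1 (r'' + 1),
        pochOf (Polynomial.X -
          Polynomial.C ((d : ℂ) * ((i : ℂ) + (j : ℂ) - 2) / 2)) (k (s + 1))) =
      (∏ i ∈ Finset.Icc 1 (s + 1),
        pochOf (Polynomial.X - Polynomial.C ((d : ℂ) * ((i : ℂ) - 1) / 2)) (k (s + 1))) *
      (∏ i ∈ Finset.Icc 1 (s + 1), ∏ j ∈ Finset.Icc 1 r'',
        pochOf (Polynomial.X -
          Polynomial.C ((d : ℂ) * ((i : ℂ) + (j : ℂ) - 1) / 2)) (k (s + 1))) := by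
    rw [← Finset.prod_mul_distrib]
    refine Finset.prod_congr rfl fun i _ => ?_
    rw [prod_Icc_one, Finset.prod_range_succ', mul_comm]
    refine congrArg₂ (· * ·) ?_ ?_
    · exact poch_sub_congr _ _ _ (by push_cast; ring)
    · rw [prod_Icc_one]
      exact Finset.prod_congr rfl fun t _ => poch_sub_congr _ _ _ (by push_cast; ring)
  have hD' : (∏ i ∈ Finset.Icc 1 (s + 1 + 1), ∏ j ∈ Finset.Icc 1 (r'' + 1),
        pochOf (Polynomial.X -
          Polynomial.C ((d : ℂ) * ((i : ℂ) + (j : ℂ) - 2) / 2)) (k i + l j)) =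
      (∏ i ∈ Finset.Icc 1 (s + 1),
        pochOf (Polynomial.X - Polynomial.C ((d : ℂ) * ((i : ℂ) - 1) / 2)) (k (s + 1))) *
      (∏ i ∈ Finset.Icc 1 (s + 1), ∏ j ∈ Finset.Icc 1 r'',
        pochOf (Polynomial.X -
          Polynomial.C ((d : ℂ) * ((i : ℂ) + (j : ℂ) - 1) / 2)) (k (s + 1))) *
      ((∏ i ∈ Finset.Icc 1 (s + 1), ∏ j ∈ Finset.Icc 1 (r'' + 1),
        pochOf (Polynomial.X +
          Polynomial.C ((k (s + 1) : ℂ) - (d : ℂ) * ((i : ℂ) + (j : ℂ) - 2) / 2))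
          (k i - k (s + 1) + l j)) *
      (∏ j ∈ Finset.Icc 1 r'',
        pochOf (Polynomial.X -
          Polynomial.C ((d : ℂ) * (((s + 1 : ℕ) : ℂ) + (j : ℂ) - 1) / 2)) (l j))) := by
    rw [Finset.prod_Icc_succ_top (by omega : 1 ≤ s + 1 + 1)]
    have hrow : (∏ j ∈ Finset.Icc 1 (r'' + 1),
        pochOf (Polynomial.X -
          Polynomial.C ((d : ℂ) * (((s + 1 + 1 : ℕ) : ℂ) + (j : ℂ) - 2) / 2))
          (k (s + 1 + 1) + l j)) =
        ∏ j ∈ Finset.Icc 1 r'',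
          pochOf (Polynomial.X -
            Polynomial.C ((d : ℂ) * (((s + 1 : ℕ) : ℂ) + (j : ℂ) - 1) / 2)) (l j) := by
      simp only [hk0, zero_add]
      rw [Finset.prod_Icc_succ_top (by omega : 1 ≤ r'' + 1), hl0, pochOf_zero, mul_one]
      exact Finset.prod_congr rfl fun j _ => poch_sub_congr _ _ _ (by push_cast; ring)
    rw [hrow]
    have hrows : (∏ i ∈ Finset.Icc 1 (s + 1), ∏ j ∈ Finset.Icc 1 (r'' + 1),
        pochOf (Polynomial.X -
          Polynomial.C ((d : ℂ) * ((i : ℂ) + (j : ℂ) - 2) / 2)) (k i + l j)) =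
        (∏ i ∈ Finset.Icc 1 (s + 1), ∏ j ∈ Finset.Icc 1 (r'' + 1),
          pochOf (Polynomial.X -
            Polynomial.C ((d : ℂ) * ((i : ℂ) + (j : ℂ) - 2) / 2)) (k (s + 1))) *
        (∏ i ∈ Finset.Icc 1 (s + 1), ∏ j ∈ Finset.Icc 1 (r'' + 1),
          pochOf (Polynomial.X +
            Polynomial.C ((k (s + 1) : ℂ) - (d : ℂ) * ((i : ℂ) + (j : ℂ) - 2) / 2))
            (k i - k (s + 1) + l j)) := by
      have step1 : (∏ i ∈ Finset.Icc 1 (s + 1), ∏ j ∈ Finset.Icc 1 (r'' + 1),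
          pochOf (Polynomial.X -
            Polynomial.C ((d : ℂ) * ((i : ℂ) + (j : ℂ) - 2) / 2)) (k i + l j)) =
          ∏ i ∈ Finset.Icc 1 (s + 1), ∏ j ∈ Finset.Icc 1 (r'' + 1),
            (pochOf (Polynomial.X -
              Polynomial.C ((d : ℂ) * ((i : ℂ) + (j : ℂ) - 2) / 2)) (k (s + 1)) *
             pochOf (Polynomial.X +
              Polynomial.C ((k (s + 1) : ℂ) - (d : ℂ) * ((i : ℂ) + (j : ℂ) - 2) / 2))
              (k i - k (s + 1) + l j)) :=
        Finset.prod_congr rfl fun i hi => Finset.prod_congr rfl fun j _ =>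
          pochOf_split _ (k i) (k (s + 1)) (l j) (hkc i hi)
      rw [step1]
      simp only [Finset.prod_mul_distrib]
    rw [hrows, hH]
    ring
  have hKG : (∏ j ∈ Finset.Icc 1 r'',
        pochOf (Polynomial.X -
          Polynomial.C ((d : ℂ) * (((s + 1 : ℕ) : ℂ) + (j : ℂ) - 1) / 2)) (k (s + 1))) *
      (∏ j ∈ Finset.Icc 1 r'',
        pochOf (Polynomial.X +
          Polynomial.C ((k (s + 1) : ℂ) -
            (d : ℂ) * (((s + 1 : ℕ) : ℂ) + (j : ℂ) - 1) / 2)) (l j)) =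
      (∏ j ∈ Finset.Icc 1 r'',
        pochOf (Polynomial.X +
          Polynomial.C ((l j : ℂ) -
            (d : ℂ) * (((s + 1 : ℕ) : ℂ) + (j : ℂ) - 1) / 2)) (k (s + 1))) *
      (∏ j ∈ Finset.Icc 1 r'',
        pochOf (Polynomial.X -
          Polynomial.C ((d : ℂ) * (((s + 1 : ℕ) : ℂ) + (j : ℂ) - 1) / 2)) (l j)) := by
    rw [← Finset.prod_mul_distrib, ← Finset.prod_mul_distrib]
    exact Finset.prod_congr rfl fun j _ =>
      pochOf_swap ((d : ℂ) * (((s + 1 : ℕ) : ℂ) + (j : ℂ) - 1) / 2) (k (s + 1)) (l j)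
  rw [hA, hB, hD']
  exact assemble _ _ _ _ _ _ _ _ hKG
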